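/- Let (Z, ζ) be a probability space and T: Z → Z a measure-preserving transformation. If f: Z → ℝ is a measurable function such that f - f∘T lies in L¹(Z, ζ), then ∫_Z (f - f∘T) dζ = 0. -/

import Mathlib

open MeasureTheory Filter

private lemma trunc_lipschitz (a b : ℝ) (n : ℝ) :
    |max (min a n) (-n) - max (min b n) (-n)| ≤ |a - b| :=
  (abs_max_sub_max_le_abs _ _ _).trans <| by
    simpa using (abs_min_sub_min_le_max a n b n).trans (by simp)

/-- **Anosov's lemma.** If `T` preserves the probability measure `ζ` and `f - f ∘ T`
is integrable (while `f` itself need not be), then `∫ (f - f ∘ T) dζ = 0`. -/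
theorem anosov_integral_sub_comp_eq_zero {Z : Type*} [MeasurableSpace Z]
    (ζ : Measure Z) [IsProbabilityMeasure ζ] (T : Z → Z)
    (hT : MeasurePreserving T ζ ζ) (f : Z → ℝ) (hf : Measurable f)
    (hint : Integrable (fun z => f z - f (T z)) ζ) :
    ∫ z, (f z - f (T z)) ∂ζ = 0 := by
  set φ : ℕ → Z → ℝ := fun n z => max (min (f z) n) (-(n : ℝ)) with hφ
  have hφmeas : ∀ n, Measurable (φ n) := fun n => (hf.min measurable_const).max measurable_const
  have hφbdd : ∀ n z, |φ n z| ≤ n := by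
    intro n z
    rw [abs_le]
    constructor
    · exact le_max_right _ _
    · exact max_le (min_le_right _ _) (by simp [Nat.cast_nonneg])
  have hφint : ∀ n, Integrable (φ n) ζ := fun n =>
    ⟨(hφmeas n).aestronglyMeasurable,
      (hasFiniteIntegral_iff_norm _).2 <| lt_of_le_of_lt
        (lintegral_mono fun z => ENNReal.ofReal_le_ofReal (hφbdd n z)) (by simp)⟩
  have hcomp : ∀ n, ∫ z, φ n (T z) ∂ζ = ∫ z, φ n z ∂ζ := by
    intro n
    rw [← integral_map hT.measurable.aemeasurable (hφmeas n).aestronglyMeasurable, hT.map_eq]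
  have hzero : ∀ n, ∫ z, (φ n z - φ n (T z)) ∂ζ = 0 := by
    intro n
    have h := integral_sub (hφint n)
      (hT.integrable_comp (hφint n).aestronglyMeasurable |>.mpr (hφint n))
    simp only [Function.comp] at h
    rw [h, hcomp n, sub_self]
  -- dominated convergence
  have hdom : ∀ n, ∀ᵐ z ∂ζ, ‖φ n z - φ n (T z)‖ ≤ |f z - f (T z)| := by
    intro n
    filter_upwards with z
    exact trunc_lipschitz (f z) (f (T z)) n
  have hlim : ∀ᵐ z ∂ζ, Tendsto (fun n => φ n z - φ n (T z)) atTop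
      (nhds (f z - f (T z))) := by
    filter_upwards with z
    have : ∀ᶠ n : ℕ in atTop, φ n z - φ n (T z) = f z - f (T z) := by
      filter_upwards [eventually_ge_atTop ⌈|f z|⌉₊, eventually_ge_atTop ⌈|f (T z)|⌉₊]
        with n h1 h2
      have e1 : φ n z = f z := by
        have : |f z| ≤ n := (Nat.le_ceil _).trans (by exact_mod_cast h1)
        rw [abs_le] at this
        simp [hφ, min_eq_left this.2, max_eq_left, this.1]
      have e2 : φ n (T z) = f (T z) := by
        have : |f (T z)| ≤ n := (Nat.le_ceil _).trans (by exact_mod_cast h2)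
        rw [abs_le] at this
        simp [hφ, min_eq_left this.2, max_eq_left, this.1]
      rw [e1, e2]
    exact Tendsto.congr' (this.mono fun n h => h.symm) tendsto_const_nhds
  have := tendsto_integral_of_dominated_convergence (fun z => |f z - f (T z)|)
    (fun n => ((hφmeas n).sub ((hφmeas n).comp hT.measurable)).aestronglyMeasurable)
    hint.abs hdom hlim
  have h0 : Tendsto (fun _ : ℕ => (0 : ℝ)) atTop (nhds (∫ z, (f z - f (T z)) ∂ζ)) := by
    refine this.congr fun n => ?_
    rw [show (fun a => (φ n - φ n ∘ T) a) = fun z => φ n z - φ n (T z) from rfl, hzero n]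
  exact (tendsto_const_nhds_iff.mp h0).symm
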